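/- Let d, Δ, t be positive integers, S a finite set, and for each i ∈ S let A_i ∈ ℤ^d with ‖A_i‖_∞ ≤ Δ. Let x : S → ℕ satisfy ∑_{i∈S} x_i = t, and write w = ∑_{i∈S} x_i·A_i ∈ ℤ^d. Then there exists a sequence σ : {1,…,t} → S in which each i ∈ S occurs exactly x_i times, such that for every k = 1,…,t, ‖A_{σ(1)} + ⋯ + A_{σ(k)} − (k/t)·w‖_∞ ≤ 2dΔ. -/

import Mathlib

open Finset

lemma reduce_frac {J : Type*} [DecidableEq J] (m : ℕ) (u : J → Fin m → ℚ)
    (b : Fin m → ℚ) (B : Finset J) :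
    ∀ (n : ℕ) (lam : J → ℚ),
      (B.filter (fun j => lam j ≠ 0 ∧ lam j ≠ 1)).card ≤ n →
      (∀ j ∈ B, 0 ≤ lam j ∧ lam j ≤ 1) →
      (∀ r, ∑ j ∈ B, lam j * u j r = b r) →
      ∃ lam' : J → ℚ,
        (∀ j ∈ B, 0 ≤ lam' j ∧ lam' j ≤ 1) ∧
        (∀ r, ∑ j ∈ B, lam' j * u j r = b r) ∧
        (B.filter (fun j => lam' j ≠ 0 ∧ lam' j ≠ 1)).card ≤ m := by
  intro n
  induction n with
  | zero =>
    intro lam hc h01 hcon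
    exact ⟨lam, h01, hcon, le_trans hc (Nat.zero_le m)⟩
  | succ n ih =>
    intro lam hc h01 hcon
    by_cases hm : (B.filter (fun j => lam j ≠ 0 ∧ lam j ≠ 1)).card ≤ m
    · exact ⟨lam, h01, hcon, hm⟩
    push_neg at hm
    set F := B.filter (fun j => lam j ≠ 0 ∧ lam j ≠ 1) with hF
    have hFB : F ⊆ B := filter_subset _ _
    have hFfrac : ∀ j ∈ F, 0 < lam j ∧ lam j < 1 := by
      intro j hj
      rw [hF, mem_filter] at hj
      obtain ⟨hjB, hne0, hne1⟩ := hj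
      obtain ⟨h0, h1⟩ := h01 j hjB
      exact ⟨lt_of_le_of_ne h0 (Ne.symm hne0), lt_of_le_of_ne h1 hne1⟩
    -- linear dependence among the u j, j ∈ F
    have hdep : ¬ LinearIndependent ℚ (fun j : {j // j ∈ F} => u j.1) := by
      intro hli
      have h2 := hli.fintype_card_le_finrank
      rw [Fintype.card_coe] at h2
      rw [Module.finrank_pi] at h2
      simp at h2
      omega
    rw [Fintype.not_linearIndependent_iff] at hdep
    obtain ⟨g, hg0, i0, hgi0⟩ := hdep
    set mu : J → ℚ := fun j => if h : j ∈ F then g ⟨j, h⟩ else 0 with hmu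
    have hmu_zero : ∀ j, j ∉ F → mu j = 0 := by
      intro j hj; simp [hmu, hj]
    have hmu_sum : ∀ r, ∑ j ∈ B, mu j * u j r = 0 := by
      intro r
      have h1 : ∑ j ∈ B, mu j * u j r = ∑ j ∈ F, mu j * u j r := by
        refine (Finset.sum_subset hFB ?_).symm
        intro j _ hj
        rw [hmu_zero j hj, zero_mul]
      rw [h1]
      have h2 : ∑ j ∈ F, mu j * u j r = ∑ j ∈ F.attach, mu j.1 * u j.1 r :=
        (Finset.sum_attach F _).symm
      rw [h2]
      have h3 := congrFun hg0 r
      rw [Finset.sum_apply] at h3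
      simp only [Pi.smul_apply, smul_eq_mul, Pi.zero_apply] at h3
      rw [← h3]
      refine Finset.sum_congr rfl ?_
      intro j _
      rw [hmu]
      simp [j.2]
    -- the set of moving coordinates
    set P := F.filter (fun j => mu j ≠ 0) with hP
    have hPne : P.Nonempty := by
      refine ⟨i0.1, ?_⟩
      rw [hP, mem_filter]
      refine ⟨i0.2, ?_⟩
      rw [hmu]
      simpa [i0.2] using hgi0
    set step : J → ℚ := fun j =>
      if 0 < mu j then (1 - lam j) / mu j else lam j / (-(mu j)) with hstep
    set C := P.image step with hC
    have hCne : C.Nonempty := hPne.image _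
    set ts := C.min' hCne with hts
    have hstep_pos : ∀ j ∈ P, 0 < step j := by
      intro j hj
      rw [hP, mem_filter] at hj
      obtain ⟨hjF, hjmu⟩ := hj
      obtain ⟨hl0, hl1⟩ := hFfrac j hjF
      rw [hstep]
      by_cases h : 0 < mu j
      · simp only [h, if_pos]
        exact div_pos (by linarith) h
      · simp only [h, if_neg]
        have : mu j < 0 := lt_of_le_of_ne (not_lt.mp h) hjmu
        exact div_pos hl0 (by linarith)
    have hts_pos : 0 < ts := by
      rw [hts]
      rw [Finset.lt_min'_iff]
      intro y hy
      rw [hC, mem_image] at hy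
      obtain ⟨j, hj, rfl⟩ := hy
      exact hstep_pos j hj
    have hts_le : ∀ j ∈ P, ts ≤ step j := by
      intro j hj
      exact Finset.min'_le C _ (mem_image_of_mem step hj)
    set lam' : J → ℚ := fun j => lam j + ts * mu j with hlam'
    -- off F nothing changes
    have hsame : ∀ j, j ∉ F → lam' j = lam j := by
      intro j hj
      show lam j + ts * mu j = lam j
      rw [hmu_zero j hj]; ring
    have h01' : ∀ j ∈ B, 0 ≤ lam' j ∧ lam' j ≤ 1 := by
      intro j hjB
      by_cases hjF : j ∈ F
      · obtain ⟨hl0, hl1⟩ := hFfrac j hjF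
        rcases lt_trichotomy (mu j) 0 with hneg | hzero | hpos
        · have hjP : j ∈ P := by rw [hP, mem_filter]; exact ⟨hjF, ne_of_lt hneg⟩
          have hle := hts_le j hjP
          simp only [hstep] at hle
          have hle' : ts ≤ lam j / (-(mu j)) := by
            simpa [not_lt_of_ge (le_of_lt hneg)] using hle
          have h2 : ts * (-(mu j)) ≤ lam j := by
            rw [← le_div_iff₀ (by linarith : (0:ℚ) < -(mu j))]
            exact hle'
          constructor
          · show 0 ≤ lam j + ts * mu j; nlinarith
          · show lam j + ts * mu j ≤ 1; nlinarith
        · constructor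
          · show 0 ≤ lam j + ts * mu j; rw [hzero]; nlinarith
          · show lam j + ts * mu j ≤ 1; rw [hzero]; nlinarith
        · have hjP : j ∈ P := by rw [hP, mem_filter]; exact ⟨hjF, ne_of_gt hpos⟩
          have hle := hts_le j hjP
          simp only [hstep] at hle
          have hle' : ts ≤ (1 - lam j) / mu j := by simpa [hpos] using hle
          have h2 : ts * mu j ≤ 1 - lam j := by
            rw [← le_div_iff₀ hpos]
            exact hle'
          constructor
          · show 0 ≤ lam j + ts * mu j; nlinarith
          · show lam j + ts * mu j ≤ 1; nlinarith
      · rw [hsame j hjF]; exact h01 j hjB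
    have hcon' : ∀ r, ∑ j ∈ B, lam' j * u j r = b r := by
      intro r
      have : ∑ j ∈ B, lam' j * u j r
          = (∑ j ∈ B, lam j * u j r) + ts * ∑ j ∈ B, mu j * u j r := by
        rw [Finset.mul_sum, ← Finset.sum_add_distrib]
        refine Finset.sum_congr rfl ?_
        intro j _
        show (lam j + ts * mu j) * u j r = lam j * u j r + ts * (mu j * u j r)
        ring
      rw [this, hcon r, hmu_sum r, mul_zero, add_zero]
    -- the minimizer becomes integral
    obtain ⟨j0, hj0P, hj0eq⟩ : ∃ j0 ∈ P, step j0 = ts :=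
      Finset.mem_image.mp (Finset.min'_mem C hCne)
    have hj0F : j0 ∈ F := (mem_filter.mp hj0P).1
    have hj0mu : mu j0 ≠ 0 := (mem_filter.mp hj0P).2
    have hj0int : lam' j0 = 0 ∨ lam' j0 = 1 := by
      have hl : lam' j0 = lam j0 + step j0 * mu j0 := by rw [hj0eq]
      rw [hl]
      simp only [hstep]
      by_cases h : 0 < mu j0
      · right
        rw [if_pos h, div_mul_cancel₀ _ (ne_of_gt h)]
        ring
      · left
        rw [if_neg h]
        have hmune : -mu j0 ≠ 0 := neg_ne_zero.mpr hj0mu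
        have h1 : lam j0 / -mu j0 * mu j0 = -lam j0 := by
          field_simp
        rw [h1]; ring
    have hsub : B.filter (fun j => lam' j ≠ 0 ∧ lam' j ≠ 1) ⊂ F := by
      constructor
      · intro j hj
        rw [mem_filter] at hj
        obtain ⟨hjB, hj1, hj2⟩ := hj
        by_contra hjF
        rw [hsame j hjF] at hj1 hj2
        exact absurd (mem_filter.mpr ⟨hjB, hj1, hj2⟩) hjF
      · intro hcontra
        have := hcontra hj0F
        rw [mem_filter] at this
        rcases hj0int with h | h
        · exact this.2.1 h
        · exact this.2.2 h
    have hcard' : (B.filter (fun j => lam' j ≠ 0 ∧ lam' j ≠ 1)).card ≤ n := by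
      have := Finset.card_lt_card hsub
      omega
    exact ih lam' hcard' h01' hcon'

def Feas (d : ℕ) {t : ℕ} (v : Fin t → Fin d → ℚ) (B : Finset (Fin t)) : Prop :=
  ∃ lam : Fin t → ℚ, (∀ j ∈ B, 0 ≤ lam j ∧ lam j ≤ 1) ∧
    (∑ j ∈ B, lam j) = (B.card : ℚ) - d ∧
    ∀ r, ∑ j ∈ B, lam j * v j r = 0

lemma chain_step {d t : ℕ} (v : Fin t → Fin d → ℚ) (B : Finset (Fin t))
    (hcard : d < B.card) (hfeas : Feas d v B) :
    ∃ i ∈ B, Feas d v (B.erase i) := by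
  obtain ⟨lam, h01, hsum, hcon⟩ := hfeas
  have hk1 : (1:ℕ) ≤ B.card := le_trans (Nat.one_le_iff_ne_zero.mpr (by omega)) le_rfl
  have hkd : (0:ℚ) < (B.card : ℚ) - d := by
    have : (d:ℚ) < (B.card : ℚ) := by exact_mod_cast hcard
    linarith
  set k := B.card with hkdef
  set ρ : ℚ := ((k:ℚ) - 1 - d) / ((k:ℚ) - d) with hρ
  have hρ0 : 0 ≤ ρ := by
    apply div_nonneg _ (le_of_lt hkd)
    have : (d:ℚ) + 1 ≤ (k:ℚ) := by exact_mod_cast hcard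
    linarith
  have hρ1 : ρ ≤ 1 := by
    rw [hρ, div_le_one hkd]; linarith
  set u : Fin t → Fin (d+1) → ℚ := fun j => Fin.cons 1 (v j) with hu
  set b : Fin (d+1) → ℚ := Fin.cons ((k:ℚ) - 1 - d) 0 with hb
  have hcon0 : ∀ r : Fin (d+1), ∑ j ∈ B, (ρ * lam j) * u j r = b r := by
    intro r
    refine Fin.cases ?_ ?_ r
    · simp only [hu, hb, Fin.cons_zero]
      rw [show ∑ j ∈ B, ρ * lam j * 1 = ρ * ∑ j ∈ B, lam j by
        rw [Finset.mul_sum]; exact Finset.sum_congr rfl fun j _ => by ring]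
      rw [hsum, hρ, div_mul_cancel₀]
      exact ne_of_gt hkd
    · intro s
      simp only [hu, hb, Fin.cons_succ, Pi.zero_apply]
      rw [show ∑ j ∈ B, ρ * lam j * v j s = ρ * ∑ j ∈ B, lam j * v j s by
        rw [Finset.mul_sum]; exact Finset.sum_congr rfl fun j _ => by ring]
      rw [hcon s, mul_zero]
  have h010 : ∀ j ∈ B, 0 ≤ ρ * lam j ∧ ρ * lam j ≤ 1 := by
    intro j hj
    obtain ⟨h0, h1⟩ := h01 j hj
    constructor
    · exact mul_nonneg hρ0 h0
    · calc ρ * lam j ≤ 1 * 1 := by nlinarith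
        _ = 1 := by ring
  obtain ⟨lam1, h01', hcon', hfrac⟩ :=
    reduce_frac (d+1) u b B B.card (fun j => ρ * lam j)
      (Finset.card_filter_le _ _) h010 hcon0
  have hSum : ∑ j ∈ B, lam1 j = (k:ℚ) - 1 - d := by
    have := hcon' 0
    simp only [hu, hb, Fin.cons_zero] at this
    simpa using this
  have hConV : ∀ s : Fin d, ∑ j ∈ B, lam1 j * v j s = 0 := by
    intro s
    have := hcon' s.succ
    simpa only [hu, hb, Fin.cons_succ, Pi.zero_apply] using this
  -- find a zero coordinate
  have hzero : ∃ i ∈ B, lam1 i = 0 := by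
    by_contra hno
    push_neg at hno
    set O := B.filter (fun j => lam1 j = 1) with hO
    set Fr := B.filter (fun j => lam1 j ≠ 0 ∧ lam1 j ≠ 1) with hFr
    have hdisj : Disjoint O Fr := by
      rw [Finset.disjoint_left]
      intro a haO haFr
      rw [hO, mem_filter] at haO
      rw [hFr, mem_filter] at haFr
      exact haFr.2.2 haO.2
    have hunion : O ∪ Fr = B := by
      apply Finset.Subset.antisymm
      · exact Finset.union_subset (filter_subset _ _) (filter_subset _ _)
      · intro j hj
        rcases eq_or_ne (lam1 j) 1 with h | h
        · exact Finset.mem_union_left _ (mem_filter.mpr ⟨hj, h⟩)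
        · exact Finset.mem_union_right _ (mem_filter.mpr ⟨hj, hno j hj, h⟩)
    have hcards : O.card + Fr.card = k := by
      rw [← Finset.card_union_of_disjoint hdisj, hunion]
    have hsplit : (O.card : ℚ) + ∑ j ∈ Fr, lam1 j = (k:ℚ) - 1 - d := by
      have h1 : ∑ j ∈ O ∪ Fr, lam1 j = ∑ j ∈ O, lam1 j + ∑ j ∈ Fr, lam1 j :=
        Finset.sum_union hdisj
      have h2 : ∑ j ∈ O, lam1 j = (O.card : ℚ) := by
        rw [Finset.sum_congr rfl (fun j hj => (mem_filter.mp hj).2)]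
        simp
        rfl
      rw [hunion, hSum] at h1
      rw [h2] at h1; linarith
    have hFrpos : ∀ j ∈ Fr, 0 < lam1 j := by
      intro j hj
      rw [hFr, mem_filter] at hj
      exact lt_of_le_of_ne (h01' j hj.1).1 (Ne.symm hj.2.1)
    have hFrsum_nonneg : 0 ≤ ∑ j ∈ Fr, lam1 j :=
      Finset.sum_nonneg fun j hj => le_of_lt (hFrpos j hj)
    -- O.card ≤ k - 1 - d in ℕ
    have hOle : O.card ≤ k - 1 - d := by
      have h3 : (O.card : ℚ) ≤ (k:ℚ) - 1 - d := by linarith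
      have h4 : ((k - 1 - d : ℕ) : ℚ) = (k:ℚ) - 1 - d := by
        have : d + 1 ≤ k := hcard
        push_cast [Nat.sub_sub]
        rw [Nat.cast_sub (by omega)]
        push_cast; ring
      rw [← h4] at h3
      exact_mod_cast h3
    have hFrcard : Fr.card = d + 1 := by
      have := hfrac
      omega
    have hOcard : O.card = k - 1 - d := by omega
    have hFrsum_zero : ∑ j ∈ Fr, lam1 j = 0 := by
      have h5 : ((k - 1 - d : ℕ) : ℚ) = (k:ℚ) - 1 - d := by
        rw [Nat.sub_sub, Nat.cast_sub (by omega)]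
        push_cast; ring
      rw [hOcard, h5] at hsplit
      linarith
    have hFrne : Fr.Nonempty := Finset.card_pos.mp (by omega)
    have : 0 < ∑ j ∈ Fr, lam1 j := Finset.sum_pos hFrpos hFrne
    rw [hFrsum_zero] at this
    exact lt_irrefl 0 this
  obtain ⟨i, hiB, hi0⟩ := hzero
  refine ⟨i, hiB, lam1, ?_, ?_, ?_⟩
  · intro j hj
    exact h01' j (Finset.mem_of_mem_erase hj)
  · rw [Finset.sum_erase _ hi0, hSum, Finset.card_erase_of_mem hiB]
    rw [Nat.cast_sub hk1]
    push_cast; ring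
  · intro r
    rw [Finset.sum_erase _ (by rw [hi0, zero_mul])]
    exact hConV r

lemma good_of_feas {d t : ℕ} {v : Fin t → Fin d → ℚ} {c : ℚ}
    (hv : ∀ j r, |v j r| ≤ c) {B : Finset (Fin t)}
    (hfeas : Feas d v B) : ∀ r, |∑ j ∈ B, v j r| ≤ (d:ℚ) * c := by
  obtain ⟨lam, h01, hsum, hcon⟩ := hfeas
  intro r
  have hkey : ∑ j ∈ B, v j r = ∑ j ∈ B, (1 - lam j) * v j r := by
    have h1 : ∑ j ∈ B, (1 - lam j) * v j r
        = ∑ j ∈ B, v j r - ∑ j ∈ B, lam j * v j r := by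
      rw [← Finset.sum_sub_distrib]
      exact Finset.sum_congr rfl fun j _ => by ring
    rw [h1, hcon r, sub_zero]
  rw [hkey]
  calc |∑ j ∈ B, (1 - lam j) * v j r|
      ≤ ∑ j ∈ B, |(1 - lam j) * v j r| := Finset.abs_sum_le_sum_abs _ _
    _ ≤ ∑ j ∈ B, (1 - lam j) * c := by
        refine Finset.sum_le_sum fun j hj => ?_
        rw [abs_mul]
        have h1 : |1 - lam j| = 1 - lam j := abs_of_nonneg (by linarith [(h01 j hj).2])
        rw [h1]
        exact mul_le_mul_of_nonneg_left (hv j r) (by linarith [(h01 j hj).2])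
    _ = (d:ℚ) * c := by
        rw [← Finset.sum_mul]
        congr 1
        rw [Finset.sum_sub_distrib, hsum, Finset.sum_const, nsmul_eq_mul, mul_one]
        ring
lemma good_small {d t : ℕ} {v : Fin t → Fin d → ℚ} {c : ℚ} (hc : 0 ≤ c)
    (hv : ∀ j r, |v j r| ≤ c) {B : Finset (Fin t)}
    (hB : B.card ≤ d) : ∀ r, |∑ j ∈ B, v j r| ≤ (d:ℚ) * c := by
  intro r
  calc |∑ j ∈ B, v j r| ≤ ∑ j ∈ B, |v j r| := Finset.abs_sum_le_sum_abs _ _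
    _ ≤ ∑ _j ∈ B, c := Finset.sum_le_sum fun j _ => hv j r
    _ = (B.card : ℚ) * c := by rw [Finset.sum_const, nsmul_eq_mul]
    _ ≤ (d:ℚ) * c := by
        apply mul_le_mul_of_nonneg_right _ hc
        exact_mod_cast hB

lemma orderings {d t : ℕ} (v : Fin t → Fin d → ℚ) (c : ℚ) (hc : 0 ≤ c)
    (hv : ∀ j r, |v j r| ≤ c) :
    ∀ (k : ℕ) (B : Finset (Fin t)), B.card = k → (d < k → Feas d v B) →
      ∃ L : List (Fin t), L.Nodup ∧ L.toFinset = B ∧ L.length = k ∧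
        ∀ n : ℕ, ∀ r, |∑ j ∈ (L.take n).toFinset, v j r| ≤ (d:ℚ) * c := by
  intro k
  induction k with
  | zero =>
    intro B hB _
    refine ⟨[], List.nodup_nil, by simpa using (Finset.card_eq_zero.mp hB).symm, rfl, ?_⟩
    intro n r
    simp only [List.take_nil, List.toFinset_nil, Finset.sum_empty, abs_zero]
    positivity
  | succ k ih =>
    intro B hB hfeas
    have hBne : B.Nonempty := Finset.card_pos.mp (by omega)
    have key : ∃ i ∈ B, (d < k → Feas d v (B.erase i)) ∧
        (∀ r, |∑ j ∈ B, v j r| ≤ (d:ℚ) * c) := by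
      by_cases hdk : d < k + 1
      · obtain ⟨i, hiB, hf⟩ := chain_step v B (hB ▸ hdk) (hfeas hdk)
        exact ⟨i, hiB, fun _ => hf, good_of_feas hv (hfeas hdk)⟩
      · obtain ⟨i, hiB⟩ := hBne
        exact ⟨i, hiB, fun h => absurd h (by omega), good_small hc hv (by omega)⟩
    obtain ⟨i, hiB, hf, hGoodB⟩ := key
    obtain ⟨L', hnd, htf, hlen, hgood⟩ :=
      ih (B.erase i) (by rw [Finset.card_erase_of_mem hiB, hB]; omega) hf
    have hiL' : i ∉ L' := by
      intro hmem
      have : i ∈ B.erase i := htf ▸ List.mem_toFinset.mpr hmem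
      exact absurd this (Finset.notMem_erase i B)
    refine ⟨L' ++ [i], ?_, ?_, ?_, ?_⟩
    · rw [List.nodup_append]
      exact ⟨hnd, List.nodup_singleton i, by simpa using fun a (ha : a ∈ L') (h : a = i) => hiL' (h ▸ ha)⟩
    · rw [List.toFinset_append, htf]
      simp only [List.toFinset_cons, List.toFinset_nil, LawfulSingleton.insert_empty_eq]
      rw [Finset.union_comm, ← Finset.insert_eq, Finset.insert_erase hiB]
    · rw [List.length_append, hlen]; rfl
    · intro n r
      by_cases hn : n ≤ k
      · rw [List.take_append_of_le_length (by omega)]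
        exact hgood n r
      · rw [List.take_of_length_le (by rw [List.length_append, hlen]; simp; omega)]
        rw [List.toFinset_append, htf]
        have : B.erase i ∪ [i].toFinset = B := by
          simp only [List.toFinset_cons, List.toFinset_nil, LawfulSingleton.insert_empty_eq]
          rw [Finset.union_comm, ← Finset.insert_eq, Finset.insert_erase hiB]
        rw [this]
        exact hGoodB r

/-- Application of the Steinitz Lemma: given columns `A i ∈ ℤ^d` of infinity norm
at most `Δ` and multiplicities `x i` summing to `t`, with `w = ∑ i, x i • A i`,
there is an ordering `σ` of the multiset (each `i ∈ S` occurring exactly `x i`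
times) whose prefix sums stay within `2dΔ` (in infinity norm) of the line
segment `(k/t)·w`. -/
theorem steinitz_multichoice_ordering
    {ι : Type*} [DecidableEq ι]
    (d Δ t : ℕ) (hd : 1 ≤ d) (hΔ : 1 ≤ Δ) (ht : 1 ≤ t)
    (S : Finset ι)
    (A : ι → Fin d → ℤ)
    (hA : ∀ i ∈ S, ∀ r : Fin d, |A i r| ≤ (Δ : ℤ))
    (x : ι → ℕ)
    (hx : ∑ i ∈ S, x i = t)
    (w : Fin d → ℤ)
    (hw : ∀ r : Fin d, w r = ∑ i ∈ S, (x i : ℤ) * A i r) :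
    ∃ σ : Fin t → ι,
      (∀ k : Fin t, σ k ∈ S) ∧
      (∀ i ∈ S, (Finset.univ.filter (fun k : Fin t => σ k = i)).card = x i) ∧
      (∀ k : Fin t, ∀ r : Fin d,
        |((∑ l ∈ Finset.Iic k, A (σ l) r : ℤ) : ℚ)
            - (((k : ℕ) + 1 : ℚ) / (t : ℚ)) * (w r : ℚ)| ≤ 2 * d * Δ) := by
  classical
  have htQ : (0:ℚ) < t := by exact_mod_cast ht
  -- construct τ : Fin t → ι realizing the multiplicities x
  have hDcard : (S.sigma (fun i => Finset.range (x i))).card = t := by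
    rw [Finset.card_sigma]; simpa using hx
  set D := S.sigma (fun i => Finset.range (x i)) with hD
  set E : {p // p ∈ D} ≃ Fin t := Finset.equivFinOfCardEq hDcard with hE
  set τ : Fin t → ι := fun j => ((E.symm j : {p // p ∈ D}) : Sigma (fun _ : ι => ℕ)).1 with hτ
  have hτS : ∀ j, τ j ∈ S := fun j => (Finset.mem_sigma.mp (E.symm j).2).1
  have hτcount : ∀ i ∈ S, (univ.filter fun j : Fin t => τ j = i).card = x i := by
    intro i hi
    have h1 : (univ.filter fun j : Fin t => τ j = i).card
        = (D.filter fun p => p.1 = i).card := by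
      refine Finset.card_bij' (fun j _ => ((E.symm j : {p // p ∈ D}) : Sigma (fun _ : ι => ℕ)))
        (fun p hp => E ⟨p, (Finset.mem_filter.mp hp).1⟩) ?_ ?_ ?_ ?_
      · intro j hj
        rw [Finset.mem_filter]
        exact ⟨(E.symm j).2, (Finset.mem_filter.mp hj).2⟩
      · intro p hp
        rw [Finset.mem_filter]
        refine ⟨Finset.mem_univ _, ?_⟩
        show ((E.symm (E ⟨p, (Finset.mem_filter.mp hp).1⟩) : {p // p ∈ D})
          : Sigma (fun _ : ι => ℕ)).1 = i
        rw [Equiv.symm_apply_apply]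
        exact (Finset.mem_filter.mp hp).2
      · intro j hj
        exact E.apply_symm_apply j
      · intro p hp
        show ((E.symm (E ⟨p, (Finset.mem_filter.mp hp).1⟩) : {p // p ∈ D})
          : Sigma (fun _ : ι => ℕ)) = p
        rw [Equiv.symm_apply_apply]
    have h2 : (D.filter fun p => p.1 = i) = ({i} : Finset ι).sigma fun i => Finset.range (x i) := by
      ext p
      simp only [hD, Finset.mem_filter, Finset.mem_sigma, Finset.mem_singleton]
      constructor
      · rintro ⟨⟨_, h⟩, rfl⟩; exact ⟨rfl, h⟩
      · rintro ⟨rfl, h⟩; exact ⟨⟨hi, h⟩, rfl⟩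
    rw [h1, h2, Finset.card_sigma, Finset.sum_singleton, Finset.card_range]
  -- the vectors
  set v : Fin t → Fin d → ℚ := fun j r => ((A (τ j) r : ℤ) : ℚ) - (w r : ℚ) / t with hv
  have hwbound : ∀ r, |(w r : ℚ)| ≤ (t : ℚ) * Δ := by
    intro r
    have h1 : |w r| ≤ (t : ℤ) * Δ := by
      rw [hw r]
      calc |∑ i ∈ S, (x i : ℤ) * A i r| ≤ ∑ i ∈ S, |(x i : ℤ) * A i r| :=
            Finset.abs_sum_le_sum_abs _ _
        _ ≤ ∑ i ∈ S, (x i : ℤ) * Δ := by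
            refine Finset.sum_le_sum fun i hi => ?_
            rw [abs_mul, abs_of_nonneg (by positivity : (0:ℤ) ≤ (x i : ℤ))]
            exact mul_le_mul_of_nonneg_left (hA i hi r) (by positivity)
        _ = (t : ℤ) * Δ := by
            rw [← Finset.sum_mul]
            congr 1
            exact_mod_cast congrArg (Nat.cast : ℕ → ℤ) hx
    calc |(w r : ℚ)| = ((|w r| : ℤ) : ℚ) := by push_cast; rfl
      _ ≤ (((t : ℤ) * Δ : ℤ) : ℚ) := by exact_mod_cast h1
      _ = (t : ℚ) * Δ := by push_cast; ring
  have hvb : ∀ j r, |v j r| ≤ 2 * Δ := by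
    intro j r
    have h1 : |((A (τ j) r : ℤ) : ℚ)| ≤ (Δ : ℚ) := by
      exact_mod_cast hA (τ j) (hτS j) r
    have h2 : |(w r : ℚ) / t| ≤ (Δ : ℚ) := by
      rw [abs_div, abs_of_pos htQ, div_le_iff₀ htQ]
      calc |(w r : ℚ)| ≤ (t : ℚ) * Δ := hwbound r
        _ = (Δ : ℚ) * t := by ring
    calc |v j r| ≤ |((A (τ j) r : ℤ) : ℚ)| + |(w r : ℚ) / t| := abs_sub _ _
      _ ≤ (Δ : ℚ) + Δ := add_le_add h1 h2
      _ = 2 * Δ := by ring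
  have hτsum : ∀ r, ∑ j : Fin t, ((A (τ j) r : ℤ) : ℚ) = (w r : ℚ) := by
    intro r
    have h1 := Finset.sum_fiberwise_of_maps_to (fun j (_ : j ∈ univ) => hτS j)
      (fun j : Fin t => ((A (τ j) r : ℤ) : ℚ))
    rw [← h1]
    rw [hw r]
    push_cast
    refine Finset.sum_congr rfl fun i hi => ?_
    have h2 : ∀ j ∈ univ.filter fun j : Fin t => τ j = i,
        ((A (τ j) r : ℤ) : ℚ) = ((A i r : ℤ) : ℚ) := by
      intro j hj
      rw [(Finset.mem_filter.mp hj).2]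
    rw [Finset.sum_congr rfl h2, Finset.sum_const, hτcount i hi, nsmul_eq_mul]
  have hvsum : ∀ r, ∑ j : Fin t, v j r = 0 := by
    intro r
    simp only [hv]
    rw [Finset.sum_sub_distrib, hτsum r, Finset.sum_const, Finset.card_univ,
      Fintype.card_fin, nsmul_eq_mul]
    field_simp
    ring
  -- feasibility of the full set
  have hfeas : d < t → Feas d v Finset.univ := by
    intro hdt
    refine ⟨fun _ => ((t:ℚ) - d) / t, ?_, ?_, ?_⟩
    · intro j _
      constructor
      · apply div_nonneg _ (le_of_lt htQ)
        have : (d:ℚ) < t := by exact_mod_cast hdt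
        linarith
      · rw [div_le_one htQ]
        have : (0:ℚ) ≤ d := by positivity
        linarith
    · rw [Finset.sum_const, Finset.card_univ, Fintype.card_fin, nsmul_eq_mul]
      field_simp
    · intro r
      rw [show ∑ j : Fin t, ((t:ℚ) - d) / t * v j r = ((t:ℚ) - d) / t * ∑ j : Fin t, v j r by
        rw [Finset.mul_sum]]
      rw [hvsum r, mul_zero]
  obtain ⟨L, hnd, htf, hlen, hgood⟩ :=
    orderings v (2 * Δ) (by positivity) hvb t Finset.univ (by simp) hfeas
  -- the ordering
  set π : Fin t → Fin t := fun l => L[(l : ℕ)]'(by rw [hlen]; exact l.2) with hπ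
  set σ : Fin t → ι := fun l => τ (π l) with hσ
  have hπinj : Function.Injective π := by
    intro a b hab
    simp only [hπ] at hab
    have := (hnd.getElem_inj_iff).mp hab
    exact Fin.ext this
  refine ⟨σ, fun k => hτS _, ?_, ?_⟩
  · -- multiplicities
    intro i hi
    rw [← hτcount i hi]
    apply Finset.card_bij (fun l _ => π l)
    · intro l hl
      rw [Finset.mem_filter] at hl ⊢
      exact ⟨Finset.mem_univ _, hl.2⟩
    · intro a _ b _ hab
      exact hπinj hab
    · intro b hb
      obtain ⟨a, ha⟩ := (Finite.injective_iff_surjective.mp hπinj) b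
      refine ⟨a, ?_, ha⟩
      rw [Finset.mem_filter] at hb ⊢
      refine ⟨Finset.mem_univ _, ?_⟩
      show τ (π a) = i
      rw [ha]; exact hb.2
  · -- the prefix bound
    intro k r
    set n : ℕ := (k : ℕ) + 1 with hn
    have hnt : n ≤ t := k.2
    set T := (L.take n).toFinset with hT
    have hTnd : (L.take n).Nodup := hnd.sublist (List.take_sublist n L)
    have hTcard : T.card = n := by
      rw [hT, List.card_toFinset, hTnd.dedup, List.length_take, hlen]
      omega
    have hsum_eq : ∑ l ∈ Finset.Iic k, ((A (σ l) r : ℤ) : ℚ)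
        = ∑ j ∈ T, ((A (τ j) r : ℤ) : ℚ) := by
      refine Finset.sum_bij (fun l _ => π l) ?_ ?_ ?_ ?_
      · intro l hl
        rw [Finset.mem_Iic] at hl
        rw [hT, List.mem_toFinset]
        show π l ∈ List.take n L
        have hlt : (l : ℕ) < (L.take n).length := by
          rw [List.length_take, hlen]
          have : (l : ℕ) ≤ (k : ℕ) := hl
          omega
        have : (L.take n)[(l : ℕ)] = π l := List.getElem_take ..
        rw [← this]
        exact List.getElem_mem hlt
      · intro a _ b _ hab
        exact hπinj hab
      · intro j hj
        rw [hT, List.mem_toFinset] at hj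
        obtain ⟨m, hm, hjm⟩ := List.getElem_of_mem hj
        rw [List.length_take, hlen] at hm
        have hmt : m < t := by omega
        have hmk : m ≤ (k : ℕ) := by omega
        refine ⟨⟨m, hmt⟩, Finset.mem_Iic.mpr ?_, ?_⟩
        · exact hmk
        · show π ⟨m, hmt⟩ = j
          rw [← hjm]
          exact (List.getElem_take ..).symm
      · intro l _
        rfl
    have hval : ∑ j ∈ T, v j r
        = (∑ j ∈ T, ((A (τ j) r : ℤ) : ℚ)) - (n : ℚ) * ((w r : ℚ) / t) := by
      simp only [hv]
      rw [Finset.sum_sub_distrib, Finset.sum_const, hTcard, nsmul_eq_mul]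
    have hbd := hgood n r
    rw [← hT] at hbd
    rw [hval] at hbd
    rw [← hsum_eq] at hbd
    have hcast : ((∑ l ∈ Finset.Iic k, A (σ l) r : ℤ) : ℚ)
        = ∑ l ∈ Finset.Iic k, ((A (σ l) r : ℤ) : ℚ) := by push_cast; rfl
    rw [hcast]
    have hfinal : (((k : ℕ) + 1 : ℚ) / (t : ℚ)) * (w r : ℚ) = (n : ℚ) * ((w r : ℚ) / t) := by
      rw [hn]; push_cast; ring
    rw [hfinal]
    calc |∑ l ∈ Finset.Iic k, ((A (σ l) r : ℤ) : ℚ) - (n : ℚ) * ((w r : ℚ) / t)|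
        ≤ (d : ℚ) * (2 * Δ) := hbd
      _ = 2 * d * Δ := by ring
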